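/- Let (T, η, μ) be a monad on the category of sets such that η is a cartesian natural transformation or μ is a cartesian natural transformation. Then the following are equivalent: (1) for every set X and all x ∈ X, τ ∈ TTX, if μ_X(τ) = η_X(x) then τ = η_{TX}(η_X(x)); (2) the same condition holds for the one-element set X = 1. In other words, the square with top id_X : X → X, left η∘η : X → TTX, right η : X → TX and bottom μ : TTX → TX is a pullback for all sets X if and only if it is a pullback for X = 1. -/

import Mathlib

open CategoryTheory

universe u

/-- For a monad on `Set` whose unit or multiplication is a cartesian natural
transformation, the strict positivity square is a pullback for all sets `X`
if and only if it is a pullback for the one-element set. -/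
theorem strictly_positive_iff_on_terminal
    (T : CategoryTheory.Monad (Type u))
    (hcart :
      (∀ (X Y : Type u) (f : X → Y) (y : Y) (t : T.obj X),
        T.η.app Y y = T.map (TypeCat.ofHom f) t → ∃! x : X, f x = y ∧ T.η.app X x = t) ∨
      (∀ (X Y : Type u) (f : X → Y) (u : T.obj X) (v : T.obj (T.obj Y)),
        T.map (TypeCat.ofHom f) u = T.μ.app Y v →
          ∃! w : T.obj (T.obj X), T.μ.app X w = u ∧ T.map (T.map (TypeCat.ofHom f)) w = v)) :
    (∀ (X : Type u) (x : X) (τ : T.obj (T.obj X)),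
        T.μ.app X τ = T.η.app X x → τ = T.η.app (T.obj X) (T.η.app X x))
    ↔
    (∀ (x : PUnit.{u + 1}) (τ : T.obj (T.obj PUnit.{u + 1})),
        T.μ.app PUnit τ = T.η.app PUnit x →
          τ = T.η.app (T.obj PUnit) (T.η.app PUnit x)) := by
  constructor
  · intro h x τ hτ; exact h PUnit x τ hτ
  · intro h X x τ hτ
    set f : X ⟶ PUnit.{u+1} := TypeCat.ofHom (fun _ => PUnit.unit) with hf
    -- μ naturality: Tf ∘ μ_X = μ_PUnit ∘ TTf
    have hmu : T.map f (T.μ.app X τ) = T.μ.app PUnit (T.map (T.map f) τ) := by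
      have := ConcreteCategory.congr_hom (T.μ.naturality f) τ
      simpa using this.symm
    -- η naturality at f applied to x
    have heta : T.map f (T.η.app X x) = T.η.app PUnit PUnit.unit := by
      have := ConcreteCategory.congr_hom (T.η.naturality f) x
      simpa using this.symm
    have hP : T.μ.app PUnit (T.map (T.map f) τ) = T.η.app PUnit PUnit.unit := by
      rw [← hmu, hτ, heta]
    have hτP : T.map (T.map f) τ
        = T.η.app (T.obj PUnit) (T.η.app PUnit PUnit.unit) :=
      h PUnit.unit _ hP
    rcases hcart with hη | hμ
    · -- η cartesian : naturality square of η at Tf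
      obtain ⟨w, ⟨hw1, hw2⟩, -⟩ :=
        hη (T.obj X) (T.obj PUnit) (T.map f)
          (T.η.app PUnit PUnit.unit) τ hτP.symm
      -- τ = η_{TX} w, and μ_X τ = w by left unit
      have hmw : T.μ.app X (T.η.app (T.obj X) w) = w :=
        ConcreteCategory.congr_hom (T.left_unit X) w
      rw [← hw2] at hτ ⊢
      rw [hmw] at hτ
      rw [hτ]
    · -- μ cartesian : apply to f, u = η_X x, v = TTf τ
      obtain ⟨w, -, huniq⟩ :=
        hμ X PUnit f (T.η.app X x) (T.map (T.map f) τ)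
          (by rw [heta, hτP]; exact (ConcreteCategory.congr_hom (T.left_unit PUnit) _).symm)
      have h1 : τ = w := huniq τ ⟨hτ, rfl⟩
      have h2 : T.η.app (T.obj X) (T.η.app X x) = w := by
        apply huniq
        constructor
        · exact ConcreteCategory.congr_hom (T.left_unit X) (T.η.app X x)
        · have := ConcreteCategory.congr_hom (T.η.naturality (T.map f)) (T.η.app X x)
          simp only [types_comp_apply, Functor.id_map] at this
          rw [← this, heta]
          exact hτP.symm
      rw [h1, ← h2]
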